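/- Any Palais–Smale sequence (u_n) for I at level c is bounded in D^{s,2}(ℝ³): there exists C such that ‖u_n‖_{D^{s,2}} ≤ C for all n. -/

import Mathlib

noncomputable section

open MeasureTheory Real Filter Topology Set

/-- ℝ³ as a Euclidean space. -/
abbrev R3 := EuclideanSpace ℝ (Fin 3)

/-- Normalization constant of the fractional Laplacian of order `σ` in dimension 3. -/
noncomputable def cFrac (sigma : ℝ) : ℝ :=
  2 ^ (2 * sigma) * Real.pi ^ (-(3 : ℝ) / 2) * Real.Gamma ((3 + 2 * sigma) / 2) /
    |Real.Gamma (-sigma)|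

/-- The fractional Laplacian `(-Δ)^σ u` on ℝ³ (singular integral formula). -/
noncomputable def fracLap (sigma : ℝ) (u : R3 → ℝ) (x : R3) : ℝ :=
  cFrac sigma * ∫ y, (u x - u y) / ‖x - y‖ ^ (3 + 2 * sigma)

/-- Squared `D^{s,2}` norm: `∫ |(-Δ)^{s/2} u|²`. -/
noncomputable def dNorm2 (s : ℝ) (u : R3 → ℝ) : ℝ :=
  ∫ x, (fracLap (s / 2) u x) ^ 2

/-- The `D^{s,2}` norm. -/
noncomputable def dNorm (s : ℝ) (u : R3 → ℝ) : ℝ :=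
  Real.sqrt (dNorm2 s u)

/-- Inner product on `D^{s,2}`: `∫ (-Δ)^{s/2}u · (-Δ)^{s/2}v`. -/
noncomputable def dInner (s : ℝ) (u v : R3 → ℝ) : ℝ :=
  ∫ x, fracLap (s / 2) u x * fracLap (s / 2) v x

/-- The `L^p` norm of `u` for a real exponent `p`. -/
noncomputable def lpNorm (p : ℝ) (u : R3 → ℝ) : ℝ :=
  (∫ x, |u x| ^ p) ^ (1 / p)

/-- The best constant `S_s` of the Sobolev embedding `D^{s,2}(ℝ³) ↪ L^{2*_s}(ℝ³)`. -/
noncomputable def Sconst (s : ℝ) : ℝ :=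
  sInf {r : ℝ | ∃ u : R3 → ℝ, u ≠ 0 ∧ r = dNorm2 s u / (lpNorm (6 / (3 - 2 * s)) u) ^ 2}

/-- The full energy functional `I` associated to the fractional Schrödinger–Poisson problem,
with `phi u` the solution of the Poisson part. -/
noncomputable def energy (s : ℝ) (V K : R3 → ℝ) (phi : (R3 → ℝ) → R3 → ℝ) (u : R3 → ℝ) : ℝ :=
  1 / 2 * (dNorm2 s u + ∫ x, V x * (u x) ^ 2) + 1 / 4 * (∫ x, K x * phi u x * (u x) ^ 2) -
    (3 - 2 * s) / 6 * ∫ x, |u x| ^ (6 / (3 - 2 * s))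

/-- The Nehari functional `⟨I'(u), u⟩`. -/
noncomputable def nehariVal (s : ℝ) (V K : R3 → ℝ) (phi : (R3 → ℝ) → R3 → ℝ)
    (u : R3 → ℝ) : ℝ :=
  dNorm2 s u + (∫ x, V x * (u x) ^ 2) + (∫ x, K x * phi u x * (u x) ^ 2) -
    ∫ x, |u x| ^ (6 / (3 - 2 * s))

/-- The derivative pairing `⟨I'(u), v⟩` of the full energy functional. -/
noncomputable def energyDeriv (s : ℝ) (V K : R3 → ℝ) (phi : (R3 → ℝ) → R3 → ℝ)
    (u v : R3 → ℝ) : ℝ :=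
  dInner s u v + (∫ x, V x * u x * v x) + (∫ x, K x * phi u x * u x * v x) -
    ∫ x, |u x| ^ (6 / (3 - 2 * s) - 2) * u x * v x

/-- every Palais–Smale sequence for `I` at level `c` is bounded in `D^{s,2}`. -/
theorem stmt14 (s : ℝ) (hs : 3 / 4 < s ∧ s ≤ 1) (V K : R3 → ℝ)
    (hV0 : ∀ x, 0 ≤ V x) (hK0 : ∀ x, 0 ≤ K x)
    (hV : MemLp V (ENNReal.ofReal (3 / (2 * s))))
    (hK : MemLp K (ENNReal.ofReal (6 / (6 * s - 3))))
    (phi : (R3 → ℝ) → R3 → ℝ)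
    (hphi : ∀ w v : R3 → ℝ, dInner s (phi w) v = ∫ x, K x * (w x) ^ 2 * v x)
    (c : ℝ) (u : ℕ → R3 → ℝ)
    (hPS1 : Tendsto (fun n => energy s V K phi (u n)) atTop (nhds c))
    (hPS2 : ∀ ε > (0 : ℝ), ∃ N : ℕ, ∀ n ≥ N, ∀ v : R3 → ℝ,
      |energyDeriv s V K phi (u n) v| ≤ ε * dNorm s v) :
    ∃ C : ℝ, ∀ n, dNorm s (u n) ≤ C := by
  obtain ⟨hs1, hs2⟩ := hs
  set p : ℝ := 6 / (3 - 2 * s) with hp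
  have h3s : (0:ℝ) < 3 - 2 * s := by linarith
  have h3s' : 3 - 2 * s < 3 / 2 := by linarith
  -- coefficient nonnegativity
  have hcoef : (0:ℝ) ≤ 1 / 4 - (3 - 2 * s) / 6 := by linarith
  -- pointwise identity for the nonlinear term
  have hpt : ∀ t : ℝ, |t| ^ (p - 2) * t * t = |t| ^ p := by
    intro t
    have hpne : p ≠ 0 := by
      have : (0:ℝ) < p := by positivity
      linarith
    have h1 : |t| ^ p = |t| ^ (p - 2) * |t| ^ (2:ℝ) := by
      rw [← Real.rpow_add' (abs_nonneg t) (by simpa using hpne)]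
      ring_nf
    have h2 : |t| ^ (2:ℝ) = t * t := by
      rw [show (2:ℝ) = ((2:ℕ):ℝ) by norm_num, Real.rpow_natCast, sq_abs, sq]
    rw [h1, h2]; ring
  -- PS1: eventually energy is below |c| + 1
  obtain ⟨N₁, hN₁⟩ := Metric.tendsto_atTop.mp hPS1 1 one_pos
  -- PS2 with ε = 1
  obtain ⟨N₂, hN₂⟩ := hPS2 1 one_pos
  set M : ℝ := |c| + 1 with hM
  have hM0 : (0:ℝ) ≤ M := by positivity
  set C₀ : ℝ := Real.sqrt (8 * M + 1) with hC₀
  have key : ∀ n, N₁ ≤ n → N₂ ≤ n → dNorm s (u n) ≤ C₀ := by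
    intro n hn1 hn2
    set D : ℝ := dNorm2 s (u n) with hD
    have hD0 : 0 ≤ D := by
      apply integral_nonneg; intro x; positivity
    have hA : 0 ≤ ∫ x, V x * (u n x) ^ 2 := by
      apply integral_nonneg; intro x
      have := hV0 x; positivity
    have hP : 0 ≤ ∫ x, |u n x| ^ p := by
      apply integral_nonneg; intro x; positivity
    -- rewrite deriv at u n
    have hInner : dInner s (u n) (u n) = D := by
      simp only [dInner, dNorm2, hD, sq]
    have hVint : (∫ x, V x * u n x * u n x) = ∫ x, V x * (u n x) ^ 2 := by
      congr 1; funext x; ring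
    have hKint : (∫ x, K x * phi (u n) x * u n x * u n x)
        = ∫ x, K x * phi (u n) x * (u n x) ^ 2 := by
      congr 1; funext x; ring
    have hPint : (∫ x, |u n x| ^ (p - 2) * u n x * u n x) = ∫ x, |u n x| ^ p := by
      congr 1; funext x; exact hpt _
    have hderiv : energyDeriv s V K phi (u n) (u n)
        = D + (∫ x, V x * (u n x) ^ 2) + (∫ x, K x * phi (u n) x * (u n x) ^ 2)
          - ∫ x, |u n x| ^ p := by
      simp only [energyDeriv, hInner, hVint, hKint, ← hp, hPint]
    -- energy bound
    have hE : energy s V K phi (u n) ≤ M := by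
      have := hN₁ n hn1
      rw [Real.dist_eq] at this
      have h1 := abs_lt.mp this
      have h2 := neg_abs_le c
      have h3 := le_abs_self c
      simp only [hM]; linarith [h1.2]
    -- derivative bound
    have hDe : |energyDeriv s V K phi (u n) (u n)| ≤ dNorm s (u n) := by
      have := hN₂ n hn2 (u n); linarith
    have hsqrt : dNorm s (u n) = Real.sqrt D := rfl
    have hDsq : Real.sqrt D ≤ (D + 1) / 2 := by
      nlinarith [Real.sq_sqrt hD0, Real.sqrt_nonneg D, sq_nonneg (Real.sqrt D - 1)]
    -- main inequality
    have hmain : 1 / 4 * D ≤ M + 1 / 4 * Real.sqrt D := by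
      have hident : energy s V K phi (u n)
          - 1 / 4 * energyDeriv s V K phi (u n) (u n)
          = 1 / 4 * D + 1 / 4 * (∫ x, V x * (u n x) ^ 2)
            + (1 / 4 - (3 - 2 * s) / 6) * (∫ x, |u n x| ^ p) := by
        rw [hderiv]; simp only [energy, ← hp]; ring
      have h4 : energyDeriv s V K phi (u n) (u n) ≥ -(Real.sqrt D) := by
        have := neg_abs_le (energyDeriv s V K phi (u n) (u n))
        rw [hsqrt] at hDe; linarith
      nlinarith [mul_nonneg hcoef hP]
    have hDle : D ≤ 8 * M + 1 := by linarith
    rw [hsqrt, hC₀]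
    exact Real.sqrt_le_sqrt hDle
  -- combine: handle initial segment
  set N : ℕ := max N₁ N₂ with hN
  refine ⟨C₀ + ∑ k ∈ Finset.range N, dNorm s (u k), fun n => ?_⟩
  have hC₀0 : 0 ≤ C₀ := Real.sqrt_nonneg _
  have hsum0 : 0 ≤ ∑ k ∈ Finset.range N, dNorm s (u k) :=
    Finset.sum_nonneg fun k _ => Real.sqrt_nonneg _
  by_cases hn : N ≤ n
  · have := key n (le_trans (le_max_left _ _) hn) (le_trans (le_max_right _ _) hn)
    linarith
  · push_neg at hn
    have : dNorm s (u n) ≤ ∑ k ∈ Finset.range N, dNorm s (u k) :=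
      Finset.single_le_sum (f := fun k => dNorm s (u k))
        (fun k _ => Real.sqrt_nonneg _) (Finset.mem_range.mpr hn)
    linarith
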